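/- Let k ≥ 1, let B be a binary de Bruijn sequence of order k (a string over {0,1} of length 2^k + k − 1 in which every length-k binary string occurs exactly once as a substring), and let T = φ(B), where φ(0) = abababaabaababa and φ(1) = abababaababaaba. Then every substring of T of length at least 15(k+1) − 1 occurs exactly once in T; equivalently, any two occurrences in T of equal substrings of length at least 15(k+1) − 1 start at the same position. -/

import Mathlib

section Defs

variable {α : Type*}

/-- `C` occurs in `T` at starting position `i`. -/
def OccursAt (C T : List α) (i : ℕ) : Prop :=
  i + C.length ≤ T.length ∧ (T.drop i).take C.length = C

/-- `C` is a cover of `T`: `C` occurs in `T` and every position of `T`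
lies within an occurrence of `C`. -/
def IsCover (C T : List α) : Prop :=
  (∃ i, OccursAt C T i) ∧
    ∀ q, q < T.length → ∃ i, OccursAt C T i ∧ i ≤ q ∧ q < i + C.length

/-- A border of `T` is both a prefix and a suffix of `T`. -/
def IsBorder (B T : List α) : Prop := B <+: T ∧ B <:+ T

/-- `p` is a period of `U`: `U[i] = U[i+p]` for all `0 ≤ i < |U| - p`. -/
def IsPeriod (p : ℕ) (U : List α) : Prop :=
  0 < p ∧ ∀ i, i + p < U.length → U[i]? = U[i + p]?

/-- `U` is aperiodic: its smallest period `p` satisfies `2p > |U|`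
(equivalently, every period `p` of `U` satisfies `2p > |U|`). -/
def StrAperiodic (U : List α) : Prop := ∀ p, IsPeriod p U → U.length < 2 * p

/-- A nonempty string `X` is primitive if `X = Y^t` implies `t = 1`. -/
def StrPrimitive (X : List α) : Prop :=
  X ≠ [] ∧ ∀ (Y : List α) (t : ℕ), X = (List.replicate t Y).flatten → t = 1

/-- A string is superprimitive if it has no proper cover. -/
def Superprimitive (T : List α) : Prop :=
  ¬ ∃ C : List α, IsCover C T ∧ C.length < T.length

/-- The length of the shortest cover of `T`. -/
noncomputable def covLen (T : List α) : ℕ :=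
  sInf {c | ∃ C : List α, C.length = c ∧ IsCover C T}

/-- `{a, a+p, ..., a+(t-1)p}` is a maximal arithmetic progression with
difference `p` inside the set `S`. -/
def MaxProg (S : Set ℕ) (p a t : ℕ) : Prop :=
  0 < t ∧ (∀ r, r < t → a + r * p ∈ S) ∧ (∀ b, b + p = a → b ∉ S) ∧ a + t * p ∉ S

end Defs

/-- The letter `a`. -/
def la : Bool := true
/-- The letter `b`. -/
def lb : Bool := false

/-- `φ(0) = abababa·aba·ababa`. -/
def phi0 : List Bool := [la,lb,la,lb,la,lb,la, la,lb,la, la,lb,la,lb,la]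
/-- `φ(1) = abababa·ababa·aba`. -/
def phi1 : List Bool := [la,lb,la,lb,la,lb,la, la,lb,la,lb,la, la,lb,la]

/-- The morphism `φ` on letters (`false` = 0, `true` = 1). -/
def phi (s : Bool) : List Bool := if s then phi1 else phi0

/-- `φ` applied letter by letter to a binary string. -/
def phiStr (S : List Bool) : List Bool := (S.map phi).flatten

/-- `B` is a binary de Bruijn sequence of order `k`: it has length `2^k + k - 1`
and every length-`k` binary string occurs in it exactly once. -/
def DeBruijn (k : ℕ) (B : List Bool) : Prop :=
  B.length = 2 ^ k + k - 1 ∧ ∀ W : List Bool, W.length = k → ∃! i, OccursAt W B i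

-- auxiliary material
def marker : List Bool := [la,lb,la,lb,la,lb,la,la]

lemma phi_length (b : Bool) : (phi b).length = 15 := by cases b <;> rfl

lemma phi_take8 (b : Bool) : (phi b).take 8 = marker := by cases b <;> rfl

lemma phi_inj {b b' : Bool} (h : phi b = phi b') : b = b' := by
  revert h; cases b <;> cases b' <;> decide

lemma phiStr_cons (b : Bool) (S : List Bool) :
    phiStr (b :: S) = phi b ++ phiStr S := by simp [phiStr]

lemma phiStr_nil : phiStr [] = [] := rfl

lemma phiStr_length (S : List Bool) : (phiStr S).length = 15 * S.length := by
  induction S with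
  | nil => rfl
  | cons b S ih => rw [phiStr_cons]; simp [phi_length, ih]; ring

lemma phiStr_drop_block : ∀ (S : List Bool) (m : ℕ) (h : m < S.length),
    (phiStr S).drop (15 * m) = phi S[m] ++ phiStr (S.drop (m + 1)) := by
  intro S
  induction S with
  | nil => intro m h; simp at h
  | cons b S ih =>
    intro m h
    cases m with
    | zero => simp [phiStr_cons]
    | succ m =>
      rw [phiStr_cons]
      have h15 : 15 * (m + 1) = (phi b).length + 15 * m := by rw [phi_length]; ring
      rw [h15, List.drop_length_add_append]
      have hm : m < S.length := by simpa using h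
      rw [ih m hm]
      simp

lemma marker_at_block (S : List Bool) (m : ℕ) (h : m < S.length) :
    ((phiStr S).drop (15 * m)).take 8 = marker := by
  rw [phiStr_drop_block S m h, List.take_append_of_le_length (by rw [phi_length]; omega),
    phi_take8]

lemma block_decode (S : List Bool) (m : ℕ) (h : m < S.length) :
    ((phiStr S).drop (15 * m)).take 15 = phi S[m] := by
  rw [phiStr_drop_block S m h, List.take_append_of_le_length (by rw [phi_length]),
    ← phi_length S[m], List.take_length]

lemma no_marker1 : ∀ (b : Bool) (r : ℕ), r + 8 ≤ 15 →
    ((phi b).drop r).take 8 = marker → r = 0 := by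
  intro b r hr h
  have hr7 : r ≤ 7 := by omega
  interval_cases r <;> revert h <;> cases b <;> decide

lemma no_marker2 : ∀ (b b' : Bool) (r : ℕ), r < 15 →
    ((phi b ++ phi b').drop r).take 8 = marker → r = 0 := by
  intro b b' r hr h
  interval_cases r <;> revert h <;> cases b <;> cases b' <;> decide

lemma marker_sync : ∀ (S : List Bool) (r : ℕ), r + 8 ≤ (phiStr S).length →
    ((phiStr S).drop r).take 8 = marker → r % 15 = 0 := by
  intro S
  induction S with
  | nil => intro r hr; simp [phiStr_nil] at hr
  | cons b S ih =>
    intro r hr h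
    rw [phiStr_cons] at h hr
    by_cases hc : 15 ≤ r
    · obtain ⟨r', rfl⟩ : ∃ r', r = 15 + r' := ⟨r - 15, by omega⟩
      rw [show (15 : ℕ) + r' = (phi b).length + r' by rw [phi_length], List.drop_length_add_append] at h
      have hr' : r' + 8 ≤ (phiStr S).length := by
        simp [phi_length] at hr; omega
      have := ih r' hr' h
      omega
    · push_neg at hc
      cases S with
      | nil =>
        simp [phiStr_nil, phi_length] at hr
        rw [phiStr_nil, List.append_nil] at h
        have := no_marker1 b r (by omega) h
        omega
      | cons b' S' =>
        rw [phiStr_cons, ← List.append_assoc] at h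
        have hlen : r ≤ (phi b ++ phi b').length := by
          simp [phi_length]; omega
        rw [List.drop_append_of_le_length hlen,
          List.take_append_of_le_length (by simp [phi_length]; omega)] at h
        have := no_marker2 b b' r hc h
        omega

lemma occ_window {X T : List Bool} {i t n : ℕ} (h : OccursAt X T i)
    (ht : t + n ≤ X.length) : (T.drop (i + t)).take n = (X.drop t).take n := by
  obtain ⟨h1, h2⟩ := h
  have hX : X.drop t = ((T.drop i).drop t).take (X.length - t) := by
    conv_lhs => rw [← h2]
    rw [List.drop_take]
  rw [hX, List.take_take, List.drop_drop]
  congr 1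
  omega

/-- Let `B` be a binary de Bruijn sequence of order `k ≥ 1` and `T = φ(B)`.
Then every substring of `T` of length at least `15(k+1) - 1` occurs exactly
once in `T`: any two occurrences of such a string start at the same position. -/
theorem stmt18 (k : ℕ) (hk : 1 ≤ k) (B : List Bool) (hB : DeBruijn k B) :
    ∀ X : List Bool, 15 * (k + 1) - 1 ≤ X.length →
      ∀ i j, OccursAt X (phiStr B) i → OccursAt X (phiStr B) j → i = j := by
  intro X hX i j hi hj
  have hXlen : 15 * k + 14 ≤ X.length := by omega
  have hTlen : (phiStr B).length = 15 * B.length := phiStr_length B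
  have hiT : i + X.length ≤ 15 * B.length := by rw [← hTlen]; exact hi.1
  have hjT : j + X.length ≤ 15 * B.length := by rw [← hTlen]; exact hj.1
  -- the offset to the first multiple of 15 at or after i
  set d : ℕ := (15 - i % 15) % 15 with hd
  have hd15 : d < 15 := by omega
  have hid : (i + d) % 15 = 0 := by omega
  -- block index m0 for position i
  set m0 : ℕ := (i + d) / 15 with hm0
  have hm0eq : 15 * m0 = i + d := by omega
  have hm0k : m0 + k ≤ B.length := by omega
  have hm0lt : m0 < B.length := by omega
  -- X contains the marker at offset d
  have hmarkX : (X.drop d).take 8 = marker := by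
    rw [← occ_window hi (by omega)]
    rw [show i + d = 15 * m0 from hm0eq.symm]
    exact marker_at_block B m0 hm0lt
  -- hence j + d is a multiple of 15
  have hmarkj : ((phiStr B).drop (j + d)).take 8 = marker := by
    rw [occ_window hj (by omega)]; exact hmarkX
  have hjd : (j + d) % 15 = 0 := marker_sync B (j + d) (by omega) hmarkj
  set m0' : ℕ := (j + d) / 15 with hm0'
  have hm0'eq : 15 * m0' = j + d := by omega
  have hm0'k : m0' + k ≤ B.length := by omega
  -- decode the k blocks covered by X at both positions
  have hdec : ∀ t (ht : t < k), B[m0 + t]'(by omega) = B[m0' + t]'(by omega) := by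
    intro t ht
    apply phi_inj
    have e1 : phi (B[m0 + t]'(by omega)) = (X.drop (d + 15 * t)).take 15 := by
      rw [← block_decode B (m0 + t) (by omega),
        show 15 * (m0 + t) = i + (d + 15 * t) by omega]
      exact occ_window hi (by omega)
    have e2 : phi (B[m0' + t]'(by omega)) = (X.drop (d + 15 * t)).take 15 := by
      rw [← block_decode B (m0' + t) (by omega),
        show 15 * (m0' + t) = j + (d + 15 * t) by omega]
      exact occ_window hj (by omega)
    rw [e1, e2]
  -- the word of length k
  set W : List Bool := (B.drop m0).take k with hW
  have hWlen : W.length = k := by simp [hW]; omega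
  have hocc1 : OccursAt W B m0 := by
    constructor
    · omega
    · rw [hWlen]
  have hocc2 : OccursAt W B m0' := by
    refine ⟨by omega, ?_⟩
    rw [hWlen, hW]
    apply List.ext_getElem
    · simp; omega
    · intro t h1 h2
      have ht : t < k := by simp at h1; omega
      rw [List.getElem_take, List.getElem_drop, List.getElem_take, List.getElem_drop]
      exact (hdec t ht).symm
  obtain ⟨n, -, hn⟩ := hB.2 W hWlen
  have : m0 = m0' := by rw [hn m0 hocc1, hn m0' hocc2]
  omega
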